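/- There exists a finite simple connected graph G with at least two vertices such that μ(G) > max over all pairs of adjacent vertices v_i ~ v_j of G of (m_i + m_j)·(d_i·m_i + d_j·m_j)/(2·m_i·m_j). (This disproves conjectured edge-maximum bound 65 of Brankov, Hansen and Stevanović.) -/

import Mathlib

noncomputable section

open Finset

/-- The degree of a vertex, as a real number. -/
def degR {V : Type*} [Fintype V] (G : SimpleGraph V) (v : V) : ℝ :=
  letI := Classical.decRel G.Adj
  (G.degree v : ℝ)

/-- The average degree of the neighbours of a vertex, as a real number:
`m_v = (∑_{u ~ v} d_u) / d_v`. -/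
def avgDegR {V : Type*} [Fintype V] (G : SimpleGraph V) (v : V) : ℝ :=
  letI := Classical.decRel G.Adj
  (∑ u ∈ G.neighborFinset v, (G.degree u : ℝ)) / (G.degree v : ℝ)

/-- The largest eigenvalue of the Laplacian matrix `L = D - A` of a finite graph. -/
def lapSpecRad {V : Type*} [Fintype V] [DecidableEq V] [Nonempty V]
    (G : SimpleGraph V) : ℝ :=
  letI := Classical.decRel G.Adj
  ⨆ i, (SimpleGraph.posSemidef_lapMatrix ℝ G).isHermitian.eigenvalues i

open Matrix

/-! ### Auxiliary general lemmas -/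

lemma rayleigh_le {n : Type*} [Fintype n] [DecidableEq n] [Nonempty n] {A : Matrix n n ℝ}
    (hA : A.IsHermitian) (x : n → ℝ) :
    x ⬝ᵥ (A *ᵥ x) ≤ (⨆ i, hA.eigenvalues i) * (x ⬝ᵥ x) := by
  set U : Matrix n n ℝ := (hA.eigenvectorUnitary : Matrix n n ℝ) with hU
  have hstar : star U = Uᵀ := by
    rw [Matrix.star_eq_conjTranspose, conjTranspose_eq_transpose_of_trivial]
  set y : n → ℝ := Uᵀ *ᵥ x with hy
  have hdiag : (Matrix.diagonal (RCLike.ofReal ∘ hA.eigenvalues) : Matrix n n ℝ)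
      = Matrix.diagonal hA.eigenvalues := by
    congr 1
  have h1 : x ⬝ᵥ (A *ᵥ x) = ∑ i, hA.eigenvalues i * (y i)^2 := by
    conv_lhs => rw [hA.spectral_theorem, Unitary.conjStarAlgAut_apply]
    rw [hstar, hdiag, ← mulVec_mulVec, ← mulVec_mulVec, dotProduct_mulVec, ← mulVec_transpose]
    simp only [← hy, dotProduct, mulVec_diagonal]
    apply Finset.sum_congr rfl
    intro i _
    ring
  have h2 : x ⬝ᵥ x = ∑ i, (y i)^2 := by
    have : y ⬝ᵥ y = (x ᵥ* U) ⬝ᵥ (Uᵀ *ᵥ x) := by rw [hy, mulVec_transpose]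
    rw [← dotProduct_mulVec, mulVec_mulVec] at this
    have hUU : U * Uᵀ = 1 := by
      rw [← hstar]; exact mem_unitaryGroup_iff.mp (hA.eigenvectorUnitary).2
    rw [hUU, one_mulVec] at this
    rw [← this, dotProduct]
    apply Finset.sum_congr rfl
    intro i _; ring
  rw [h1, h2, Finset.mul_sum]
  apply Finset.sum_le_sum
  intro i _
  have h3 : hA.eigenvalues i ≤ ⨆ j, hA.eigenvalues j :=
    le_ciSup (Set.Finite.bddAbove (Set.finite_range _)) i
  nlinarith [sq_nonneg (y i)]

lemma degR_eq {V : Type*} [Fintype V] (G : SimpleGraph V) [DecidableRel G.Adj] (v : V) :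
    degR G v = (G.degree v : ℝ) := by
  unfold degR; congr!

lemma avgDegR_eq {V : Type*} [Fintype V] (G : SimpleGraph V) [DecidableRel G.Adj] (v : V) :
    avgDegR G v = ((∑ u ∈ G.neighborFinset v, G.degree u : ℕ) : ℝ) / (G.degree v : ℝ) := by
  unfold avgDegR; push_cast; congr!

lemma lap_cast {V : Type*} [Fintype V] [DecidableEq V] (G : SimpleGraph V) [DecidableRel G.Adj] :
    G.lapMatrix ℝ = (G.lapMatrix ℤ).map (Int.castRingHom ℝ) := by
  ext i j
  simp only [SimpleGraph.lapMatrix, SimpleGraph.degMatrix, Matrix.sub_apply,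
    Matrix.diagonal_apply, SimpleGraph.adjMatrix_apply, Matrix.map_apply, Int.coe_castRingHom]
  push_cast [apply_ite (Int.cast (R := ℝ))]
  rfl

lemma dot_lap_cast {V : Type*} [Fintype V] [DecidableEq V] (G : SimpleGraph V)
    [DecidableRel G.Adj] (xi : V → ℤ) :
    (fun v => ((xi v : ℤ) : ℝ)) ⬝ᵥ (G.lapMatrix ℝ *ᵥ (fun v => ((xi v : ℤ) : ℝ)))
      = ((xi ⬝ᵥ (G.lapMatrix ℤ *ᵥ xi) : ℤ) : ℝ) := by
  have h1 : (fun v => ((xi v : ℤ) : ℝ)) = (Int.castRingHom ℝ) ∘ xi := rfl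
  have h2 : (G.lapMatrix ℝ) *ᵥ ((Int.castRingHom ℝ) ∘ xi)
      = (Int.castRingHom ℝ) ∘ (G.lapMatrix ℤ *ᵥ xi) := by
    funext i; rw [lap_cast]; exact (RingHom.map_mulVec _ _ _ i).symm
  rw [h1, h2, ← RingHom.map_dotProduct]
  rfl

lemma dot_cast {V : Type*} [Fintype V] (xi : V → ℤ) :
    (fun v => ((xi v : ℤ) : ℝ)) ⬝ᵥ (fun v => ((xi v : ℤ) : ℝ)) = ((xi ⬝ᵥ xi : ℤ) : ℝ) := by
  rw [show (fun v => ((xi v : ℤ) : ℝ)) = (Int.castRingHom ℝ) ∘ xi from rfl,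
    ← RingHom.map_dotProduct]
  rfl

/-! ### The counterexample graph: the star `K_{1,10}` with every edge subdivided. -/

def sAdj (a b : ℕ) : Bool :=
  (a == 0 && 1 ≤ b && b ≤ 10) || (b == 0 && 1 ≤ a && a ≤ 10) ||
  (b == a + 10 && 1 ≤ a && a ≤ 10) || (a == b + 10 && 1 ≤ b && b ≤ 10)

lemma sAdj_symm : ∀ a b : Fin 21, sAdj a.val b.val → sAdj b.val a.val := by decide
lemma sAdj_irrefl : ∀ a : Fin 21, ¬ sAdj a.val a.val := by decide

def spider : SimpleGraph (Fin 21) where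
  Adj i j := sAdj i.val j.val = true
  symm := ⟨fun i j h => sAdj_symm i j h⟩
  loopless := ⟨fun i h => sAdj_irrefl i h⟩

instance : DecidableRel spider.Adj := fun _ _ => inferInstanceAs (Decidable (_ = true))

lemma hdeg : ∀ v : Fin 21,
    spider.degree v = (if v.val = 0 then 10 else if v.val ≤ 10 then 2 else 1) := by decide

lemma hsum : ∀ v : Fin 21, (∑ u ∈ spider.neighborFinset v, spider.degree u)
    = (if v.val = 0 then 20 else if v.val ≤ 10 then 11 else 2) := by decide

lemma spider_connected : spider.Connected := by
  rw [SimpleGraph.connected_iff]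
  refine ⟨fun u v => ?_, ⟨0⟩⟩
  have key : ∀ v : Fin 21, spider.Reachable 0 v := by
    intro v
    by_cases h0 : v.val = 0
    · have : v = 0 := Fin.ext h0
      subst this; rfl
    by_cases h1 : v.val ≤ 10
    · refine SimpleGraph.Adj.reachable ?_
      show sAdj 0 v.val = true
      simp [sAdj]; omega
    · have h2 : v.val - 10 < 21 := by omega
      refine SimpleGraph.Reachable.trans (v := ⟨v.val - 10, h2⟩) ?_ ?_
      · refine SimpleGraph.Adj.reachable ?_
        show sAdj 0 (v.val - 10) = true
        simp [sAdj]; omega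
      · refine SimpleGraph.Adj.reachable ?_
        show sAdj (v.val - 10) v.val = true
        simp [sAdj]; omega
  exact ((key u).symm).trans (key v)

def xint : Fin 21 → ℤ := fun i => if i.val = 0 then -90 else if i.val ≤ 10 then 10 else -1

lemma lap_dot_val : xint ⬝ᵥ (spider.lapMatrix ℤ *ᵥ xint) = 101210 := by decide

lemma dot_val : xint ⬝ᵥ xint = 9110 := by decide

lemma hmu : (10121/911 : ℝ) ≤ lapSpecRad spider := by
  unfold lapSpecRad
  set xR : Fin 21 → ℝ := fun v => ((xint v : ℤ) : ℝ) with hxR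
  have hray := rayleigh_le
    (letI := Classical.decRel spider.Adj;
      (SimpleGraph.posSemidef_lapMatrix ℝ spider).isHermitian) xR
  have hLc : (letI := Classical.decRel spider.Adj; spider.lapMatrix ℝ)
      = spider.lapMatrix ℝ := by congr!
  nth_rw 1 [hLc] at hray
  rw [hxR, dot_lap_cast, dot_cast, lap_dot_val, dot_val] at hray
  push_cast at hray
  linarith

/-- There exists a finite simple connected graph `G` with at least two vertices whose
Laplacian spectral radius exceeds the conjectured edge-maximum bound. -/
theorem exists_counterexample_bound65 :
    ∃ (V : Type) (_ : Fintype V) (_ : DecidableEq V) (_ : Nonempty V)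
      (G : SimpleGraph V), G.Connected ∧ 2 ≤ Fintype.card V ∧
      ∀ i j : V, G.Adj i j →
        (fun di mi dj mj => (mi + mj) * (di * mi + dj * mj) / (2 * mi * mj))
          (degR G i) (avgDegR G i) (degR G j) (avgDegR G j) < lapSpecRad G := by
  refine ⟨Fin 21, inferInstance, inferInstance, inferInstance, spider,
    spider_connected, by norm_num, ?_⟩
  intro i j hadj
  have hdij : sAdj i.val j.val = true := hadj
  rw [degR_eq, degR_eq, avgDegR_eq spider i, avgDegR_eq spider j,
    hdeg i, hdeg j, hsum i, hsum j]
  simp only [sAdj, Bool.or_eq_true, Bool.and_eq_true, beq_iff_eq, decide_eq_true_eq] at hdij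
  have hb := hmu
  rcases hdij with (((⟨⟨hi0, hj1⟩, hj10⟩ | ⟨⟨hj0, hi1⟩, hi10⟩) | ⟨⟨hji, hi1⟩, hi10⟩) |
    ⟨⟨hij, hj1⟩, hj10⟩)
  · rw [if_pos hi0, if_pos hi0, if_neg (by omega : ¬ j.val = 0), if_pos hj10,
      if_neg (by omega : ¬ j.val = 0), if_pos hj10]
    norm_num
    linarith
  · rw [if_pos hj0, if_pos hj0, if_neg (by omega : ¬ i.val = 0), if_pos hi10,
      if_neg (by omega : ¬ i.val = 0), if_pos hi10]
    norm_num
    linarith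
  · -- j = i + 10 : i is a middle vertex, j is a leaf
    rw [if_neg (by omega : ¬ i.val = 0), if_pos hi10, if_neg (by omega : ¬ i.val = 0),
      if_pos hi10, if_neg (by omega : ¬ j.val = 0), if_neg (by omega : ¬ j.val ≤ 10),
      if_neg (by omega : ¬ j.val = 0), if_neg (by omega : ¬ j.val ≤ 10)]
    norm_num
    linarith
  · -- i = j + 10 : j is a middle vertex, i is a leaf
    rw [if_neg (by omega : ¬ j.val = 0), if_pos hj10, if_neg (by omega : ¬ j.val = 0),
      if_pos hj10, if_neg (by omega : ¬ i.val = 0), if_neg (by omega : ¬ i.val ≤ 10),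
      if_neg (by omega : ¬ i.val = 0), if_neg (by omega : ¬ i.val ≤ 10)]
    norm_num
    linarith
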